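/- arXiv:2303.00421 — 4 statements merged into one kernel-verified Lean document; each statement's English description precedes it below -/
import Mathlib

section
/- Let H be a finite-dimensional real inner product space; let 𝐁 be self-adjoint positive definite and 𝐀 positive semidefinite on H. Let τ > 0, σ ≥ 1/2, and suppose y, z, f ∈ H satisfy 𝐁(z − y)/τ + 𝐀(σz + (1−σ)y) = f. Then ‖z‖_𝐁 ≤ ‖y‖_𝐁 + τ‖f‖_{𝐁⁻¹}. -/
open InnerProductSpace

theorem stmt_6
    {H : Type*} [NormedAddCommGroup H] [InnerProductSpace ℝ H] [FiniteDimensional ℝ H]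
    (B Binv A : H →ₗ[ℝ] H)
    (hBsa : ∀ x y : H, ⟪B x, y⟫_ℝ = ⟪x, B y⟫_ℝ)
    (hBpd : ∀ x : H, x ≠ 0 → 0 < ⟪B x, x⟫_ℝ)
    (hinv₁ : ∀ x : H, B (Binv x) = x) (hinv₂ : ∀ x : H, Binv (B x) = x)
    (hApsd : ∀ x : H, 0 ≤ ⟪A x, x⟫_ℝ)
    (τ : ℝ) (hτ : 0 < τ) (σ : ℝ) (hσ : 1 / 2 ≤ σ)
    (y z f : H)
    (hscheme : (1 / τ) • B (z - y) + A (σ • z + (1 - σ) • y) = f) :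
    Real.sqrt ⟪B z, z⟫_ℝ ≤ Real.sqrt ⟪B y, y⟫_ℝ + τ * Real.sqrt ⟪Binv f, f⟫_ℝ := by
  have hBpsd : ∀ x : H, 0 ≤ ⟪B x, x⟫_ℝ := by
    intro x
    rcases eq_or_ne x 0 with h | h
    · simp [h]
    · exact (hBpd x h).le
  have hsym : ∀ u v : H, ⟪B u, v⟫_ℝ = ⟪B v, u⟫_ℝ := by
    intro u v
    rw [hBsa, real_inner_comm]
  have CS : ∀ u v : H, ⟪B u, v⟫_ℝ ^ 2 ≤ ⟪B u, u⟫_ℝ * ⟪B v, v⟫_ℝ := by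
    intro u v
    have key : ∀ t : ℝ, 0 ≤ ⟪B v, v⟫_ℝ * (t * t) + (2 * ⟪B u, v⟫_ℝ) * t + ⟪B u, u⟫_ℝ := by
      intro t
      have h0 := hBpsd (u + t • v)
      have hexp : ⟪B (u + t • v), u + t • v⟫_ℝ
          = ⟪B v, v⟫_ℝ * (t * t) + (2 * ⟪B u, v⟫_ℝ) * t + ⟪B u, u⟫_ℝ := by
        simp only [map_add, map_smul, inner_add_left, inner_add_right,
          real_inner_smul_left, real_inner_smul_right, smul_eq_mul]
        rw [hsym v u]
        ring
      linarith [hexp ▸ h0]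
    have h : discrim ⟪B v, v⟫_ℝ (2 * ⟪B u, v⟫_ℝ) ⟪B u, u⟫_ℝ ≤ 0 := discrim_le_zero key
    rw [discrim] at h
    nlinarith
  -- Cauchy-Schwarz against f through B⁻¹
  set F := Real.sqrt ⟪Binv f, f⟫_ℝ with hF
  have hF2 : ⟪Binv f, f⟫_ℝ = F ^ 2 := by
    rw [hF, Real.sq_sqrt]
    have := hBpsd (Binv f)
    rwa [hinv₁, real_inner_comm] at this
  have hFnn : 0 ≤ F := Real.sqrt_nonneg _
  have fCS : ∀ x : H, ⟪f, x⟫_ℝ ≤ F * Real.sqrt ⟪B x, x⟫_ℝ := by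
    intro x
    have h := CS (Binv f) x
    rw [hinv₁] at h
    have h2 : ⟪B (Binv f), Binv f⟫_ℝ = ⟪Binv f, f⟫_ℝ := by
      rw [hinv₁, real_inner_comm]
    have h3 : ⟪f, Binv f⟫_ℝ = F ^ 2 := (real_inner_comm (Binv f) f).trans hF2
    rw [h3] at h
    have hx := hBpsd x
    have hsx : Real.sqrt ⟪B x, x⟫_ℝ ^ 2 = ⟪B x, x⟫_ℝ := Real.sq_sqrt hx
    nlinarith [Real.sqrt_nonneg ⟪B x, x⟫_ℝ, mul_nonneg hFnn (Real.sqrt_nonneg ⟪B x, x⟫_ℝ)]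
  set a := Real.sqrt ⟪B z, z⟫_ℝ with ha
  set b := Real.sqrt ⟪B y, y⟫_ℝ with hb
  set t := Real.sqrt ⟪B (z - y), z - y⟫_ℝ with ht
  have hann : 0 ≤ a := Real.sqrt_nonneg _
  have hbnn : 0 ≤ b := Real.sqrt_nonneg _
  have htnn : 0 ≤ t := Real.sqrt_nonneg _
  have ha2 : ⟪B z, z⟫_ℝ = a ^ 2 := (Real.sq_sqrt (hBpsd z)).symm
  have hb2 : ⟪B y, y⟫_ℝ = b ^ 2 := (Real.sq_sqrt (hBpsd y)).symm
  have ht2 : ⟪B (z - y), z - y⟫_ℝ = t ^ 2 := (Real.sq_sqrt (hBpsd (z - y))).symm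
  -- pairing the scheme with w
  have hfw : ⟪f, σ • z + (1 - σ) • y⟫_ℝ
      = (1 / τ) * ⟪B (z - y), σ • z + (1 - σ) • y⟫_ℝ
        + ⟪A (σ • z + (1 - σ) • y), σ • z + (1 - σ) • y⟫_ℝ := by
    rw [← hscheme]
    simp [inner_add_left, real_inner_smul_left]
  -- expand the inner products
  have hp : ⟪B y, z⟫_ℝ = ⟪B z, y⟫_ℝ := hsym y z
  have hBdw : ⟪B (z - y), σ • z + (1 - σ) • y⟫_ℝ
      = σ * ⟪B z, z⟫_ℝ - (1 - σ) * ⟪B y, y⟫_ℝ + (1 - 2 * σ) * ⟪B z, y⟫_ℝ := by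
    simp only [map_sub, inner_sub_left, inner_add_right,
      real_inner_smul_right]
    rw [hp]
    ring
  have htexp : ⟪B (z - y), z - y⟫_ℝ = ⟪B z, z⟫_ℝ - 2 * ⟪B z, y⟫_ℝ + ⟪B y, y⟫_ℝ := by
    simp only [map_sub, inner_sub_left, inner_sub_right]
    rw [hp]
    ring
  have hfwexp : ⟪f, σ • z + (1 - σ) • y⟫_ℝ = σ * ⟪f, z⟫_ℝ + (1 - σ) * ⟪f, y⟫_ℝ := by
    simp [inner_add_right, real_inner_smul_right]
  -- bounds on the f pairings
  have hfz : ⟪f, z⟫_ℝ ≤ F * a := fCS z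
  have hfy : ⟪f, y⟫_ℝ ≤ F * b := fCS y
  have hfd : ⟪f, z⟫_ℝ - ⟪f, y⟫_ℝ ≤ F * t := by
    have := fCS (z - y)
    rwa [inner_sub_right] at this
  have hA := hApsd (σ • z + (1 - σ) • y)
  -- the main energy inequality
  have key : a ^ 2 - b ^ 2 + (2 * σ - 1) * t ^ 2
      ≤ τ * (F * (a + b) + (2 * σ - 1) * (F * t)) := by
    have h1 : σ * ⟪f, z⟫_ℝ + (1 - σ) * ⟪f, y⟫_ℝ
        ≥ (1 / τ) * (σ * ⟪B z, z⟫_ℝ - (1 - σ) * ⟪B y, y⟫_ℝ + (1 - 2 * σ) * ⟪B z, y⟫_ℝ) := by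
      rw [← hBdw, ← hfwexp]
      rw [hfw]
      linarith only [hA]
    -- σ * fz + (1-σ) * fy = (1/2)(fz + fy) + (σ - 1/2)(fz - fy)
    have hs : (0:ℝ) ≤ 2 * σ - 1 := by linarith
    have hfb : σ * ⟪f, z⟫_ℝ + (1 - σ) * ⟪f, y⟫_ℝ
        ≤ (1 / 2) * (F * a + F * b) + (σ - 1 / 2) * (F * t) := by
      have e1 : (σ - 1 / 2) * (⟪f, z⟫_ℝ - ⟪f, y⟫_ℝ) ≤ (σ - 1 / 2) * (F * t) :=
        mul_le_mul_of_nonneg_left hfd (by linarith)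
      linarith only [e1, hfz, hfy, hs]
    have h2 : (1 / τ) * (σ * ⟪B z, z⟫_ℝ - (1 - σ) * ⟪B y, y⟫_ℝ + (1 - 2 * σ) * ⟪B z, y⟫_ℝ)
        ≤ (1 / 2) * (F * a + F * b) + (σ - 1 / 2) * (F * t) := le_trans h1 hfb
    have hBzz : σ * ⟪B z, z⟫_ℝ - (1 - σ) * ⟪B y, y⟫_ℝ + (1 - 2 * σ) * ⟪B z, y⟫_ℝ
        = (a ^ 2 - b ^ 2) / 2 + (σ - 1 / 2) * t ^ 2 := by
      have h3 : ⟪B z, y⟫_ℝ = (⟪B z, z⟫_ℝ + ⟪B y, y⟫_ℝ - ⟪B (z - y), z - y⟫_ℝ) / 2 := by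
        rw [htexp]; ring
      rw [h3, ha2, hb2, ht2]; ring
    rw [hBzz] at h2
    have h3 : (a ^ 2 - b ^ 2) / 2 + (σ - 1 / 2) * t ^ 2
        ≤ τ * (1 / 2 * (F * a + F * b) + (σ - 1 / 2) * (F * t)) := by
      have hm := mul_le_mul_of_nonneg_left h2 hτ.le
      have he : τ * (1 / τ * ((a ^ 2 - b ^ 2) / 2 + (σ - 1 / 2) * t ^ 2))
          = (a ^ 2 - b ^ 2) / 2 + (σ - 1 / 2) * t ^ 2 := by
        field_simp
      rw [he] at hm
      exact hm
    linarith only [h3]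
  -- triangle inequality in the B norm
  have htri : a ≤ b + t := by
    have hcs := CS y (z - y)
    have hsq : a ^ 2 ≤ (b + t) ^ 2 := by
      have hexp : ⟪B z, z⟫_ℝ = ⟪B y, y⟫_ℝ + 2 * ⟪B y, z - y⟫_ℝ + ⟪B (z - y), z - y⟫_ℝ := by
        simp only [map_sub, inner_sub_left, inner_sub_right]
        rw [hp]
        ring
      rw [ha2, hb2, ht2] at hexp
      rw [hb2, ht2] at hcs
      nlinarith only [hcs, hexp, mul_nonneg hbnn htnn, hbnn, htnn]
    nlinarith only [hsq, hann, hbnn, htnn]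
  have hs : (0:ℝ) ≤ 2 * σ - 1 := by linarith
  rcases le_or_gt t (τ * F) with hcase | hcase
  · linarith only [htri, hcase]
  · -- t > τF : drop the (2σ-1) terms
    have hdrop : (2 * σ - 1) * (t ^ 2) ≥ (2 * σ - 1) * (τ * (F * t)) := by
      have h5 : τ * (F * t) ≤ t ^ 2 := by nlinarith only [hcase, htnn, hτ, hFnn]
      nlinarith only [h5, hs, mul_le_mul_of_nonneg_left h5 hs]
    have h4 : a ^ 2 ≤ b ^ 2 + τ * F * (a + b) := by linarith only [key, hdrop]
    rcases eq_or_lt_of_le (add_nonneg hann hbnn) with hab | hab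
    · have hτF : 0 ≤ τ * F := mul_nonneg hτ.le hFnn
      have ha0 : a = 0 := by linarith only [hab.symm ▸ le_refl (0:ℝ), hann, hbnn, hab]
      linarith only [ha0, hbnn, hτF]
    · have h5 : (a - b - τ * F) * (a + b) ≤ 0 := by nlinarith only [h4]
      have h6 : a - b - τ * F ≤ 0 := by nlinarith only [h5, hab]
      linarith only [h6]
end

section
/- Let H be a finite-dimensional real inner product space, 𝐁 self-adjoint positive definite, 𝐀 positive semidefinite, σ ≥ 1/2, and let (τₙ)ₙ be positive time steps. If a sequence (yⁿ) in H satisfies 𝐁(y^{n+1} − yⁿ)/τ_{n+1} + 𝐀(σ y^{n+1} + (1−σ)yⁿ) = fⁿ for all n ≥ 0, then for every n, ‖y^{n+1}‖_𝐁 ≤ ‖y⁰‖_𝐁 + Σ_{k=0}^{n} τ_{k+1} ‖f^k‖_{𝐁⁻¹}. -/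
open InnerProductSpace

section aux
variable {H : Type*} [NormedAddCommGroup H] [InnerProductSpace ℝ H]
variable (B : H →ₗ[ℝ] H)

lemma myB_symm (hBsa : ∀ x y : H, ⟪B x, y⟫_ℝ = ⟪x, B y⟫_ℝ) (x y : H) :
    ⟪B x, y⟫_ℝ = ⟪B y, x⟫_ℝ := by
  rw [hBsa x y, real_inner_comm]

lemma myB_nonneg (hBpd : ∀ x : H, x ≠ 0 → 0 < ⟪B x, x⟫_ℝ) (x : H) :
    0 ≤ ⟪B x, x⟫_ℝ := by
  by_cases h : x = 0
  · simp [h]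
  · exact (hBpd x h).le

lemma myB_cs (hBsa : ∀ x y : H, ⟪B x, y⟫_ℝ = ⟪x, B y⟫_ℝ)
    (hBpd : ∀ x : H, x ≠ 0 → 0 < ⟪B x, x⟫_ℝ) (x y : H) :
    ⟪B x, y⟫_ℝ ≤ Real.sqrt ⟪B x, x⟫_ℝ * Real.sqrt ⟪B y, y⟫_ℝ := by
  set a := ⟪B x, x⟫_ℝ with ha
  set c := ⟪B y, y⟫_ℝ with hc
  set p := ⟪B x, y⟫_ℝ with hp
  have hq : ∀ t : ℝ, 0 ≤ c * (t * t) + (2 * p) * t + a := by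
    intro t
    have h0 : 0 ≤ ⟪B (x + t • y), x + t • y⟫_ℝ := myB_nonneg B hBpd _
    have hexp : ⟪B (x + t • y), x + t • y⟫_ℝ = c * (t * t) + (2 * p) * t + a := by
      have hsym := myB_symm B hBsa x y
      simp only [map_add, map_smul, inner_add_left, inner_add_right,
        inner_smul_left, inner_smul_right, RingHom.id_apply, conj_trivial]
      rw [← ha, ← hc, ← hp, ← hsym]
      ring
    rwa [hexp] at h0
  have hd : discrim c (2 * p) a ≤ 0 := discrim_le_zero hq
  simp only [discrim] at hd
  have hp2 : p ^ 2 ≤ a * c := by nlinarith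
  calc p ≤ |p| := le_abs_self p
    _ = Real.sqrt (p ^ 2) := (Real.sqrt_sq_eq_abs p).symm
    _ ≤ Real.sqrt (a * c) := Real.sqrt_le_sqrt hp2
    _ = Real.sqrt a * Real.sqrt c := Real.sqrt_mul (myB_nonneg B hBpd x) c

lemma myB_triangle (hBsa : ∀ x y : H, ⟪B x, y⟫_ℝ = ⟪x, B y⟫_ℝ)
    (hBpd : ∀ x : H, x ≠ 0 → 0 < ⟪B x, x⟫_ℝ) (x y : H) :
    Real.sqrt ⟪B (x + y), x + y⟫_ℝ ≤ Real.sqrt ⟪B x, x⟫_ℝ + Real.sqrt ⟪B y, y⟫_ℝ := by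
  have hx := myB_nonneg B hBpd x
  have hy := myB_nonneg B hBpd y
  have hcs := myB_cs B hBsa hBpd x y
  have hexp : ⟪B (x + y), x + y⟫_ℝ =
      ⟪B x, x⟫_ℝ + 2 * ⟪B x, y⟫_ℝ + ⟪B y, y⟫_ℝ := by
    have hsym := myB_symm B hBsa x y
    simp only [map_add, inner_add_left, inner_add_right]
    rw [← hsym]; ring
  have h1 : ⟪B (x + y), x + y⟫_ℝ ≤ (Real.sqrt ⟪B x, x⟫_ℝ + Real.sqrt ⟪B y, y⟫_ℝ) ^ 2 := by
    rw [hexp]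
    have hx2 : Real.sqrt ⟪B x, x⟫_ℝ ^ 2 = ⟪B x, x⟫_ℝ := Real.sq_sqrt hx
    have hy2 : Real.sqrt ⟪B y, y⟫_ℝ ^ 2 = ⟪B y, y⟫_ℝ := Real.sq_sqrt hy
    nlinarith
  calc Real.sqrt ⟪B (x + y), x + y⟫_ℝ
      ≤ Real.sqrt ((Real.sqrt ⟪B x, x⟫_ℝ + Real.sqrt ⟪B y, y⟫_ℝ) ^ 2) := Real.sqrt_le_sqrt h1
    _ = Real.sqrt ⟪B x, x⟫_ℝ + Real.sqrt ⟪B y, y⟫_ℝ := by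
        rw [Real.sqrt_sq (by positivity)]

lemma myB_smul (hBpd : ∀ x : H, x ≠ 0 → 0 < ⟪B x, x⟫_ℝ) (t : ℝ) (x : H) :
    Real.sqrt ⟪B (t • x), t • x⟫_ℝ = |t| * Real.sqrt ⟪B x, x⟫_ℝ := by
  have : ⟪B (t • x), t • x⟫_ℝ = t ^ 2 * ⟪B x, x⟫_ℝ := by
    simp only [map_smul, inner_smul_left, inner_smul_right, RingHom.id_apply, conj_trivial]
    ring
  rw [this, Real.sqrt_mul (sq_nonneg t), Real.sqrt_sq_eq_abs]

lemma scalar_step (a b c d k : ℝ) (hb : 0 ≤ b) (hc : 0 ≤ c) (hd : 0 ≤ d)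
    (hk : 0 ≤ k) (htri : a ≤ b + d)
    (hmain : (a ^ 2 - b ^ 2) / 2 + k * d ^ 2 ≤ c * ((a + b) / 2 + k * d)) : a ≤ b + c := by
  by_contra hcon
  push_neg at hcon
  have hdc : c < d := by linarith
  nlinarith [mul_nonneg hk (mul_nonneg hd (sub_nonneg.mpr hdc.le)),
    mul_pos (show (0:ℝ) < a + b by nlinarith) (show (0:ℝ) < a - b - c by linarith)]

end aux

theorem stmt_7
    {H : Type*} [NormedAddCommGroup H] [InnerProductSpace ℝ H] [FiniteDimensional ℝ H]
    (B Binv A : H →ₗ[ℝ] H)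
    (hBsa : ∀ x y : H, ⟪B x, y⟫_ℝ = ⟪x, B y⟫_ℝ)
    (hBpd : ∀ x : H, x ≠ 0 → 0 < ⟪B x, x⟫_ℝ)
    (hinv₁ : ∀ x : H, B (Binv x) = x) (hinv₂ : ∀ x : H, Binv (B x) = x)
    (hApsd : ∀ x : H, 0 ≤ ⟪A x, x⟫_ℝ)
    (σ : ℝ) (hσ : 1 / 2 ≤ σ)
    (τ : ℕ → ℝ) (hτ : ∀ n, 0 < τ n)
    (y f : ℕ → H)
    (hscheme : ∀ n : ℕ,
      (1 / τ (n + 1)) • B (y (n + 1) - y n) + A (σ • y (n + 1) + (1 - σ) • y n) = f n) :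
    ∀ n : ℕ,
      Real.sqrt ⟪B (y (n + 1)), y (n + 1)⟫_ℝ ≤
        Real.sqrt ⟪B (y 0), y 0⟫_ℝ +
          ∑ k ∈ Finset.range (n + 1), τ (k + 1) * Real.sqrt ⟪Binv (f k), f k⟫_ℝ := by
  -- One step estimate
  have step : ∀ n : ℕ,
      Real.sqrt ⟪B (y (n + 1)), y (n + 1)⟫_ℝ ≤
        Real.sqrt ⟪B (y n), y n⟫_ℝ + τ (n + 1) * Real.sqrt ⟪Binv (f n), f n⟫_ℝ := by
    intro n
    set τ' := τ (n + 1) with hτ'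
    have hτpos : 0 < τ' := hτ (n + 1)
    set v : H := y (n + 1) - y n with hv
    set w : H := σ • y (n + 1) + (1 - σ) • y n with hw
    set g : H := Binv (f n) with hg
    -- inner product of the scheme with w
    have hBg : B g = f n := hinv₁ (f n)
    have hkey : ⟪B v, w⟫_ℝ ≤ τ' * ⟪B g, w⟫_ℝ := by
      have h := hscheme n
      have h2 : ⟪(1 / τ') • B v + A w, w⟫_ℝ = ⟪B g, w⟫_ℝ := by
        rw [h, hBg]
      rw [inner_add_left, inner_smul_left] at h2
      have hA := hApsd w
      have : (1 / τ') * ⟪B v, w⟫_ℝ ≤ ⟪B g, w⟫_ℝ := by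
        simp only [conj_trivial] at h2; linarith
      have h4 := mul_le_mul_of_nonneg_left this hτpos.le
      have h5 : τ' * (1 / τ' * ⟪B v, w⟫_ℝ) = ⟪B v, w⟫_ℝ := by
        field_simp
      linarith
    -- notation
    set a := Real.sqrt ⟪B (y (n + 1)), y (n + 1)⟫_ℝ with hadef
    set b := Real.sqrt ⟪B (y n), y n⟫_ℝ with hbdef
    set d := Real.sqrt ⟪B v, v⟫_ℝ with hddef
    set G := Real.sqrt ⟪B g, g⟫_ℝ with hGdef
    have hG_eq : G = Real.sqrt ⟪Binv (f n), f n⟫_ℝ := by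
      rw [hGdef]
      congr 1
      rw [hBg, real_inner_comm, hg]
    rw [← hG_eq]
    have ha0 : 0 ≤ a := Real.sqrt_nonneg _
    have hb0 : 0 ≤ b := Real.sqrt_nonneg _
    have hd0 : 0 ≤ d := Real.sqrt_nonneg _
    have hG0 : 0 ≤ G := Real.sqrt_nonneg _
    have ha2 : a ^ 2 = ⟪B (y (n + 1)), y (n + 1)⟫_ℝ := Real.sq_sqrt (myB_nonneg B hBpd _)
    have hb2 : b ^ 2 = ⟪B (y n), y n⟫_ℝ := Real.sq_sqrt (myB_nonneg B hBpd _)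
    have hd2 : d ^ 2 = ⟪B v, v⟫_ℝ := Real.sq_sqrt (myB_nonneg B hBpd _)
    -- left side identity : ⟪B v, w⟫ = (a² - b²)/2 + (σ - 1/2) d²
    have hleft : ⟪B v, w⟫_ℝ = (a ^ 2 - b ^ 2) / 2 + (σ - 1 / 2) * d ^ 2 := by
      rw [ha2, hb2, hd2, hv, hw]
      have hsym := myB_symm B hBsa (y (n + 1)) (y n)
      simp only [map_sub, inner_sub_left, inner_add_right, inner_smul_right,
        conj_trivial, inner_sub_right]
      rw [hsym]
      ring
    -- right side : ⟪B g, w⟫ ≤ G * ((a + b)/2 + (σ - 1/2) d)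
    have hright : ⟪B g, w⟫_ℝ ≤ G * ((a + b) / 2 + (σ - 1 / 2) * d) := by
      have hcs := myB_cs B hBsa hBpd g w
      have hwnorm : Real.sqrt ⟪B w, w⟫_ℝ ≤ (a + b) / 2 + (σ - 1 / 2) * d := by
        have hdecomp : w = (1 / 2 : ℝ) • (y (n + 1) + y n) + (σ - 1 / 2) • v := by
          rw [hw, hv]; module
        rw [hdecomp]
        calc Real.sqrt ⟪B ((1 / 2 : ℝ) • (y (n + 1) + y n) + (σ - 1 / 2) • v),
              (1 / 2 : ℝ) • (y (n + 1) + y n) + (σ - 1 / 2) • v⟫_ℝ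
            ≤ Real.sqrt ⟪B ((1 / 2 : ℝ) • (y (n + 1) + y n)), (1 / 2 : ℝ) • (y (n + 1) + y n)⟫_ℝ
              + Real.sqrt ⟪B ((σ - 1 / 2) • v), (σ - 1 / 2) • v⟫_ℝ :=
              myB_triangle B hBsa hBpd _ _
          _ ≤ (a + b) / 2 + (σ - 1 / 2) * d := by
              rw [myB_smul B hBpd, myB_smul B hBpd]
              have h1 : Real.sqrt ⟪B (y (n + 1) + y n), y (n + 1) + y n⟫_ℝ ≤ a + b :=
                myB_triangle B hBsa hBpd _ _
              have h2 : |(1 / 2 : ℝ)| = 1 / 2 := by norm_num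
              have h3 : |σ - 1 / 2| = σ - 1 / 2 := abs_of_nonneg (by linarith)
              rw [h2, h3]
              nlinarith [Real.sqrt_nonneg ⟪B (y (n + 1) + y n), y (n + 1) + y n⟫_ℝ]
      calc ⟪B g, w⟫_ℝ ≤ G * Real.sqrt ⟪B w, w⟫_ℝ := hcs
        _ ≤ G * ((a + b) / 2 + (σ - 1 / 2) * d) := by
            exact mul_le_mul_of_nonneg_left hwnorm hG0
    -- triangle : a ≤ b + d
    have htri : a ≤ b + d := by
      have : y (n + 1) = y n + v := by rw [hv]; abel
      calc a = Real.sqrt ⟪B (y n + v), y n + v⟫_ℝ := by rw [hadef, this]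
        _ ≤ b + d := myB_triangle B hBsa hBpd _ _
    -- combine
    have hmain : (a ^ 2 - b ^ 2) / 2 + (σ - 1 / 2) * d ^ 2 ≤
        τ' * G * ((a + b) / 2 + (σ - 1 / 2) * d) := by
      calc (a ^ 2 - b ^ 2) / 2 + (σ - 1 / 2) * d ^ 2 = ⟪B v, w⟫_ℝ := hleft.symm
        _ ≤ τ' * ⟪B g, w⟫_ℝ := hkey
        _ ≤ τ' * (G * ((a + b) / 2 + (σ - 1 / 2) * d)) :=
            mul_le_mul_of_nonneg_left hright hτpos.le
        _ = τ' * G * ((a + b) / 2 + (σ - 1 / 2) * d) := by ring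
    set c := τ' * G with hcdef
    have hc0 : 0 ≤ c := mul_nonneg hτpos.le hG0
    exact scalar_step a b c d (σ - 1 / 2) hb0 hc0 hd0 (by linarith) htri hmain
  -- induction
  intro n
  induction n with
  | zero =>
      simpa using step 0
  | succ m ih =>
      rw [Finset.sum_range_succ]
      calc Real.sqrt ⟪B (y (m + 1 + 1)), y (m + 1 + 1)⟫_ℝ
          ≤ Real.sqrt ⟪B (y (m + 1)), y (m + 1)⟫_ℝ
            + τ (m + 1 + 1) * Real.sqrt ⟪Binv (f (m + 1)), f (m + 1)⟫_ℝ := step (m + 1)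
        _ ≤ Real.sqrt ⟪B (y 0), y 0⟫_ℝ
            + ∑ k ∈ Finset.range (m + 1), τ (k + 1) * Real.sqrt ⟪Binv (f k), f k⟫_ℝ
            + τ (m + 1 + 1) * Real.sqrt ⟪Binv (f (m + 1)), f (m + 1)⟫_ℝ :=
            add_le_add_left ih _
        _ = _ := add_assoc _ _ _
end

section
/- Let H be a finite-dimensional real inner product space with self-adjoint positive definite operators C, B, A, let τ > 0 and σ ≥ 1/4, and set D = C + (σ − 1/4)τ²A. Suppose y⁻, y, y⁺, f ∈ H satisfy C(y⁺ − 2y + y⁻)/τ² + B(y⁺ − y⁻)/(2τ) + A(σy⁺ + (1−2σ)y + σy⁻) = f. Then ‖(y⁺ − y)/τ‖_D² + ‖(y⁺ + y)/2‖_A² ≤ ‖(y − y⁻)/τ‖_D² + ‖(y + y⁻)/2‖_A² + (τ/2)‖f‖_{B⁻¹}². -/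
open InnerProductSpace

theorem stmt_10
    {H : Type*} [NormedAddCommGroup H] [InnerProductSpace ℝ H] [FiniteDimensional ℝ H]
    (C B Binv A : H →ₗ[ℝ] H)
    (hCsa : ∀ x y : H, ⟪C x, y⟫_ℝ = ⟪x, C y⟫_ℝ)
    (hCpd : ∀ x : H, x ≠ 0 → 0 < ⟪C x, x⟫_ℝ)
    (hBsa : ∀ x y : H, ⟪B x, y⟫_ℝ = ⟪x, B y⟫_ℝ)
    (hBpd : ∀ x : H, x ≠ 0 → 0 < ⟪B x, x⟫_ℝ)
    (hinv₁ : ∀ x : H, B (Binv x) = x) (hinv₂ : ∀ x : H, Binv (B x) = x)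
    (hAsa : ∀ x y : H, ⟪A x, y⟫_ℝ = ⟪x, A y⟫_ℝ)
    (hApd : ∀ x : H, x ≠ 0 → 0 < ⟪A x, x⟫_ℝ)
    (τ : ℝ) (hτ : 0 < τ) (σ : ℝ) (hσ : 1 / 4 ≤ σ)
    (ym y yp f : H)
    (hscheme : (1 / τ ^ 2) • C (yp - 2 • y + ym) + (1 / (2 * τ)) • B (yp - ym) +
        A (σ • yp + (1 - 2 * σ) • y + σ • ym) = f) :
    -- D = C + (σ − 1/4)τ²A
    ⟪(C + ((σ - 1 / 4) * τ ^ 2) • A) ((1 / τ) • (yp - y)), (1 / τ) • (yp - y)⟫_ℝ +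
        ⟪A ((1 / 2 : ℝ) • (yp + y)), (1 / 2 : ℝ) • (yp + y)⟫_ℝ ≤
      ⟪(C + ((σ - 1 / 4) * τ ^ 2) • A) ((1 / τ) • (y - ym)), (1 / τ) • (y - ym)⟫_ℝ +
        ⟪A ((1 / 2 : ℝ) • (y + ym)), (1 / 2 : ℝ) • (y + ym)⟫_ℝ +
        (τ / 2) * ⟪Binv f, f⟫_ℝ := by
  have hτ' : τ ≠ 0 := ne_of_gt hτ
  -- polarization for self-adjoint operators
  have key : ∀ (X : H →ₗ[ℝ] H), (∀ p q : H, ⟪X p, q⟫_ℝ = ⟪p, X q⟫_ℝ) →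
      ∀ p q : H, ⟪X (p - q), p + q⟫_ℝ = ⟪X p, p⟫_ℝ - ⟪X q, q⟫_ℝ := by
    intro X hX p q
    have h1 : ⟪X p, q⟫_ℝ = ⟪X q, p⟫_ℝ := by rw [hX, real_inner_comm]
    simp only [map_sub, inner_sub_left, inner_add_right]
    linarith
  -- rewrite scheme combinations
  have e1 : yp - 2 • y + ym = (yp - y) - (y - ym) := by
    rw [two_smul]; abel
  have e2 : σ • yp + (1 - 2 * σ) • y + σ • ym
      = (1/4 : ℝ) • ((yp + y) + (y + ym)) + (σ - 1/4) • ((yp - y) - (y - ym)) := by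
    match_scalars <;> ring
  have e3 : yp - ym = (yp - y) + (y - ym) := by abel
  have e4 : yp - ym = (yp + y) - (y + ym) := by abel
  have hfv : ⟪f, yp - ym⟫_ℝ
      = (1/τ^2) * (⟪C (yp - y), yp - y⟫_ℝ - ⟪C (y - ym), y - ym⟫_ℝ)
        + (1/(2*τ)) * ⟪B (yp - ym), yp - ym⟫_ℝ
        + (1/4) * (⟪A (yp + y), yp + y⟫_ℝ - ⟪A (y + ym), y + ym⟫_ℝ)
        + (σ - 1/4) * (⟪A (yp - y), yp - y⟫_ℝ - ⟪A (y - ym), y - ym⟫_ℝ) := by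
    rw [← hscheme, e1, e2]
    have h1 := key C hCsa (yp - y) (y - ym)
    have h3 := key A hAsa (yp - y) (y - ym)
    have h2 : ⟪A ((yp + y) + (y + ym)), yp - ym⟫_ℝ
        = ⟪A (yp + y), yp + y⟫_ℝ - ⟪A (y + ym), y + ym⟫_ℝ := by
      have h2' := key A hAsa (yp + y) (y + ym)
      have hsym : ⟪A ((yp + y) + (y + ym)), yp - ym⟫_ℝ
          = ⟪A (yp - ym), (yp + y) + (y + ym)⟫_ℝ := by
        rw [hAsa, real_inner_comm]
      rw [hsym, e4, h2']
    have hA2 : ⟪A ((1/4 : ℝ) • ((yp + y) + (y + ym)) + (σ - 1/4) • ((yp - y) - (y - ym))),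
        yp - ym⟫_ℝ = (1/4) * ⟪A ((yp + y) + (y + ym)), yp - ym⟫_ℝ
          + (σ - 1/4) * ⟪A ((yp - y) - (y - ym)), yp - ym⟫_ℝ := by
      rw [map_add, map_smul, map_smul, inner_add_left, real_inner_smul_left,
        real_inner_smul_left]
    rw [inner_add_left, inner_add_left, real_inner_smul_left, real_inner_smul_left, hA2, h2]
    rw [e3, h1, h3]
    ring
  -- quadratic inequality: ⟪f,v⟫ ≤ ⟪Bv,v⟫ + (1/4)⟪B⁻¹f,f⟫ with v = (1/(2τ))•(yp-ym)
  set v : H := (1/(2*τ)) • (yp - ym) with hv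
  have hq : ⟪f, v⟫_ℝ - ⟪B v, v⟫_ℝ ≤ (1/4) * ⟪Binv f, f⟫_ℝ := by
    have h0 : 0 ≤ ⟪B (v - (1/2 : ℝ) • Binv f), v - (1/2 : ℝ) • Binv f⟫_ℝ := by
      rcases eq_or_ne (v - (1/2 : ℝ) • Binv f) 0 with h | h
      · rw [h]; simp
      · exact (hBpd _ h).le
    have hbv : ⟪B v, Binv f⟫_ℝ = ⟪v, f⟫_ℝ := by rw [hBsa, hinv₁]
    have hfvv : ⟪f, v⟫_ℝ = ⟪v, f⟫_ℝ := real_inner_comm _ _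
    have hff : ⟪f, Binv f⟫_ℝ = ⟪Binv f, f⟫_ℝ := real_inner_comm _ _
    simp only [map_sub, map_smul, inner_sub_left, inner_sub_right, real_inner_smul_left,
      real_inner_smul_right, hinv₁] at h0
    linarith
  -- energy identity
  have hBvv : ⟪B v, v⟫_ℝ = (1/(4*τ^2)) * ⟪B (yp - ym), yp - ym⟫_ℝ := by
    rw [hv, map_smul, real_inner_smul_left, real_inner_smul_right, ← mul_assoc]
    congr 1
    field_simp
    ring
  have hfvv2 : ⟪f, v⟫_ℝ = (1/(2*τ)) * ⟪f, yp - ym⟫_ℝ := by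
    rw [hv, real_inner_smul_right]
  have expand : ∀ (c : ℝ) (a : H),
      ⟪(C + ((σ - 1/4) * τ^2) • A) (c • a), c • a⟫_ℝ
        = c^2 * ⟪C a, a⟫_ℝ + c^2 * ((σ - 1/4) * τ^2) * ⟪A a, a⟫_ℝ := by
    intro c a
    simp only [LinearMap.add_apply, LinearMap.smul_apply, map_smul, inner_add_left,
      real_inner_smul_left, real_inner_smul_right]
    ring
  have expA : ∀ (c : ℝ) (a : H), ⟪A (c • a), c • a⟫_ℝ = c^2 * ⟪A a, a⟫_ℝ := by
    intro c a
    simp only [map_smul, real_inner_smul_left, real_inner_smul_right]; ring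
  have hE : 2 * τ * (⟪f, v⟫_ℝ - ⟪B v, v⟫_ℝ)
      = (1/τ^2) * (⟪C (yp - y), yp - y⟫_ℝ - ⟪C (y - ym), y - ym⟫_ℝ)
        + (1/4) * (⟪A (yp + y), yp + y⟫_ℝ - ⟪A (y + ym), y + ym⟫_ℝ)
        + (σ - 1/4) * (⟪A (yp - y), yp - y⟫_ℝ - ⟪A (y - ym), y - ym⟫_ℝ) := by
    rw [hfvv2, hBvv, hfv]
    field_simp
    ring
  have hmul : 2 * τ * (⟪f, v⟫_ℝ - ⟪B v, v⟫_ℝ) ≤ 2 * τ * ((1/4) * ⟪Binv f, f⟫_ℝ) :=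
    mul_le_mul_of_nonneg_left hq (by positivity)
  rw [hE] at hmul
  have hcoef : 2 * τ * ((1/4) * ⟪Binv f, f⟫_ℝ) = (τ/2) * ⟪Binv f, f⟫_ℝ := by ring
  rw [hcoef] at hmul
  rw [expand, expand, expA, expA]
  have h15 : (1/τ)^2 * ((σ - 1/4) * τ^2) = σ - 1/4 := by field_simp
  have h14 : (1/τ)^2 = 1/τ^2 := by field_simp
  rw [h15, h14]
  have h12 : ((1:ℝ)/2)^2 = 1/4 := by norm_num
  rw [h12]
  linarith
end

section
/- Let H be a finite-dimensional real inner product space, D self-adjoint positive definite, α > 0, and u₀ ∈ H. Then u(t) = (I + α(1 − exp(−t/α))·D)·exp(−tD)·u₀ satisfies the bi-parabolic equation (d/dt + D)u + α(d/dt + D)²u = 0 for t > 0 with u(0) = u₀ and u'(0) = 0. -/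
open InnerProductSpace

set_option maxHeartbeats 1000000 in
set_option synthInstance.maxHeartbeats 1000000 in
open NormedSpace in
theorem stmt_13
    {H : Type*} [NormedAddCommGroup H] [InnerProductSpace ℝ H] [FiniteDimensional ℝ H]
    (D : H →L[ℝ] H)
    (hDsa : ∀ x y : H, ⟪D x, y⟫_ℝ = ⟪x, D y⟫_ℝ)
    (hDpd : ∀ x : H, x ≠ 0 → 0 < ⟪D x, x⟫_ℝ)
    (α : ℝ) (hα : 0 < α) (u₀ : H)
    (u : ℝ → H)
    (hu : ∀ t : ℝ,
      u t = ((1 + (α * (1 - Real.exp (-t / α))) • D) ∘L exp ((-t) • D)) u₀) :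
    ∃ du ddu : ℝ → H,
      (∀ t : ℝ, HasDerivAt u (du t) t) ∧
      (∀ t : ℝ, HasDerivAt du (ddu t) t) ∧
      (∀ t : ℝ, 0 < t →
        α • ddu t + (du t + (2 * α) • D (du t)) + (D (u t) + α • D (D (u t))) = 0) ∧
      u 0 = u₀ ∧ du 0 = 0 := by
  have hα' : α ≠ 0 := ne_of_gt hα
  have hFeq : ∀ t : ℝ, exp ((-t) • D) = exp (t • (-D)) := by
    intro t; rw [neg_smul, smul_neg]
  have hcomm : ∀ (t : ℝ) (x : H), D (exp ((-t) • D) x) = exp ((-t) • D) (D x) := by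
    intro t x
    have h : D * exp ((-t) • D) = exp ((-t) • D) * D := by
      have hc : Commute ((-t) • D) D := by
        unfold Commute SemiconjBy
        rw [smul_mul_assoc, mul_smul_comm]
      exact (hc.exp_left).symm.eq
    calc D (exp ((-t) • D) x) = (D * exp ((-t) • D)) x := rfl
      _ = (exp ((-t) • D) * D) x := by rw [← h]
      _ = exp ((-t) • D) (D x) := rfl
  -- E and its iterates
  set E : ℝ → H := fun t => exp ((-t) • D) u₀ with hEdef
  set g : ℝ → ℝ := fun t => Real.exp (-t / α) with hgdef
  set f : ℝ → ℝ := fun t => α * (1 - g t) with hfdef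
  set a : ℝ → H := fun t => D (E t) with ha
  set b : ℝ → H := fun t => D (a t) with hb
  set c : ℝ → H := fun t => D (b t) with hc
  -- derivative of E
  have hE' : ∀ t, HasDerivAt E (-(a t)) t := by
    intro t
    have h1 : HasDerivAt (fun s : ℝ => exp (s • (-D))) (exp (t • (-D)) * (-D)) t :=
      hasDerivAt_exp_smul_const (-D) t
    have h2 : HasDerivAt (fun s : ℝ => exp ((-s) • D)) (exp ((-t) • D) * (-D)) t := by
      have : (fun s : ℝ => exp (s • (-D))) = fun s : ℝ => exp ((-s) • D) := by
        funext s; rw [hFeq]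
      rw [← this, hFeq t]; exact h1
    have h3 := h2.clm_apply (hasDerivAt_const t u₀)
    have h4 : (exp ((-t) • D) * (-D)) u₀ + exp ((-t) • D) 0 = -(a t) := by
      have : (exp ((-t) • D) * (-D)) u₀ = exp ((-t) • D) (-(D u₀)) := rfl
      rw [this, map_zero, add_zero, map_neg, ha, hEdef]
      simp only [hcomm t u₀]
    rw [← h4]
    exact h3
  have hg : ∀ t, HasDerivAt g (-(1/α) * g t) t := by
    intro t
    have h1 : HasDerivAt (fun t : ℝ => -t / α) (-(1/α)) t := by
      simpa [neg_div] using ((hasDerivAt_id t).neg.div_const α)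
    have := h1.exp
    convert this using 1
    rw [hgdef]; ring
  have hf : ∀ t, HasDerivAt f (g t) t := by
    intro t
    have h1 := ((hasDerivAt_const t (1:ℝ)).sub (hg t)).const_mul α
    exact (h1 : HasDerivAt f _ t).congr_deriv (by rw [zero_sub, neg_mul, neg_neg, ← mul_assoc, mul_one_div_cancel hα', one_mul])
  have hA : ∀ t, HasDerivAt a (-(b t)) t := fun t => by
    have h1 := D.hasFDerivAt.comp_hasDerivAt t (hE' t)
    rw [map_neg] at h1
    exact h1
  have hB : ∀ t, HasDerivAt b (-(c t)) t := fun t => by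
    have h1 := D.hasFDerivAt.comp_hasDerivAt t (hA t)
    rw [map_neg] at h1
    exact h1
  -- u in terms of E, f, a
  have hueq : ∀ t, u t = E t + f t • a t := by
    intro t
    rw [hu t]
    simp only [ContinuousLinearMap.comp_apply, ContinuousLinearMap.add_apply,
      ContinuousLinearMap.one_apply, ContinuousLinearMap.smul_apply]
    rfl
  have hufun : u = fun t => E t + f t • a t := funext hueq
  refine ⟨fun t => (g t - 1) • a t - f t • b t,
    fun t => b t - ((1/α) * g t) • a t - (2 * g t) • b t + f t • c t, ?_, ?_, ?_, ?_, ?_⟩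
  · intro t
    rw [hufun]
    have hderiv := (hE' t).add ((hf t).smul (hA t))
    convert hderiv using 1
    · rfl
    · module
  · intro t
    have hderiv := (((hg t).sub_const 1).smul (hA t)).sub ((hf t).smul (hB t))
    convert hderiv using 1
    · rfl
    · module
  · intro t _
    have hDu : D (u t) = a t + f t • b t := by
      rw [hueq t, map_add, map_smul]
    have hDDu : D (D (u t)) = b t + f t • c t := by
      rw [hDu, map_add, map_smul]
    have hDdu : D ((g t - 1) • a t - f t • b t) = (g t - 1) • b t - f t • c t := by
      rw [map_sub, map_smul, map_smul]
    rw [hDDu, hDu, hDdu]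
    have hfg : f t = α * (1 - g t) := rfl
    rw [hfg]
    match_scalars <;> field_simp <;> ring
  · rw [hueq 0]
    have hg0 : g 0 = 1 := by rw [hgdef]; simp
    have hE0 : E 0 = u₀ := by rw [hEdef]; simp
    rw [hE0, hfdef]
    simp [hg0]
  · have hg0 : g 0 = 1 := by rw [hgdef]; simp
    simp [hg0, hfdef]
end
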